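/- Let G₁ and G₂ be groups and let f : G₁ → G₂ be a map satisfying f(a²ba⁻¹) = f(a)²·f(b)·f(a)⁻¹ for all a,b ∈ G₁. Then f(a³b) = f(a)³·f(b) for all a,b ∈ G₁. -/
import Mathlib


/-- A map preserving the gyrogroup operation `a ⊙ b = a² b a⁻¹` satisfies
`f (a³ b) = (f a)³ · f b`. -/
theorem gyro_hom_eq_6 (G₁ G₂ : Type*) [Group G₁] [Group G₂] (f : G₁ → G₂)
    (hf : ∀ a b : G₁, f (a ^ 2 * b * a⁻¹) = (f a) ^ 2 * f b * (f a)⁻¹) :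
    ∀ a b : G₁, f (a ^ 3 * b) = (f a) ^ 3 * f b := by
  have hsq : ∀ u : G₁, f (u ^ 2) = f u ^ 2 := by
    intro u
    have h := hf u u
    rw [show u ^ 2 * u * u⁻¹ = u ^ 2 by group] at h
    rw [h]; group
  have hcac : ∀ g c : G₁, f (c * g * c) = f c * f g * f c := by
    intro g c
    have h1 := hf g c
    have h2 := hf g (c * g * c)
    have h3 := hsq (g ^ 2 * c * g⁻¹)
    rw [show (g ^ 2 * c * g⁻¹) ^ 2 = g ^ 2 * (c * g * c) * g⁻¹ by simp only [pow_two]; group] at h3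
    rw [h2, h1] at h3
    calc f (c * g * c) = (f g ^ 2)⁻¹ * (f g ^ 2 * f (c * g * c) * (f g)⁻¹) * f g := by
          group
      _ = (f g ^ 2)⁻¹ * ((f g ^ 2 * f c * (f g)⁻¹) ^ 2) * f g := by rw [h3]
      _ = f c * f g * f c := by simp only [pow_two]; group
  intro a b
  have h4 := hf a (a * b * a)
  rw [show a ^ 2 * (a * b * a) * a⁻¹ = a ^ 3 * b by group] at h4
  rw [h4, hcac b a]
  group
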